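/- Let P be a fine, saturated, sharp (toric) monoid. Then there exists a group homomorphism φ : P^gp → ℤ such that φ(u) > 0 for every nonzero element u ∈ P. Consequently, the map sending u ∈ P to φ(u) defines a monoid homomorphism P → ℕ whose preimage of 0 is {0}. -/

import Mathlib

open Finset

/-- Gordan-type lemma over ℚ. -/
lemma exists_pos_functional {V : Type*} [AddCommGroup V] [Module ℚ V] :
    ∀ (k : ℕ) (x : Fin k → V), (∀ i, x i ≠ 0) →
      (∀ c : Fin k → ℚ, (∀ i, 0 ≤ c i) → ∑ i, c i • x i = 0 → ∀ i, c i = 0) →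
      ∃ f : Module.Dual ℚ V, ∀ i, 0 < f (x i) := by
  intro k
  induction k with
  | zero => exact fun x _ _ => ⟨0, fun i => i.elim0⟩
  | succ k ih =>
    intro x hx hprop
    have hprop' : ∀ c : Fin k → ℚ, (∀ i, 0 ≤ c i) →
        ∑ i, c i • x i.castSucc = 0 → ∀ i, c i = 0 := by
      intro c hc hsum i
      have h0 : ∀ j, (Fin.snoc c 0 : Fin (k+1) → ℚ) j = 0 := by
        apply hprop
        · intro j
          induction j using Fin.lastCases with
          | last => simp
          | cast j => simpa using hc j
        · rw [Fin.sum_univ_castSucc]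
          simpa using hsum
      have := h0 i.castSucc
      simpa using this
    obtain ⟨f, hf⟩ := ih (fun i => x i.castSucc) (fun i => hx _) hprop'
    set z := x (Fin.last k) with hz
    rcases lt_trichotomy 0 (f z) with hfz | hfz | hfz
    · refine ⟨f, fun i => ?_⟩
      induction i using Fin.lastCases with
      | last => exact hfz
      | cast i => exact hf i
    · -- f z = 0 : perturb by a functional positive at z
      have hzne : z ≠ 0 := hx _
      have hexg : ¬ ∀ φ : Module.Dual ℚ V, φ z = 0 := by
        rw [Module.forall_dual_apply_eq_zero_iff]; exact hzne
      push_neg at hexg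
      obtain ⟨g₀, hg₀⟩ := hexg
      set g : Module.Dual ℚ V := (g₀ z) • g₀ with hgdef
      have hgzpos : 0 < g z := by
        simp only [hgdef, LinearMap.smul_apply, smul_eq_mul]
        exact mul_self_pos.mpr hg₀
      set S : Finset ℚ :=
        insert 1 (Finset.univ.image fun i : Fin k =>
          (|g (x i.castSucc)| + 1) / f (x i.castSucc)) with hS
      have hSne : S.Nonempty := ⟨1, by simp [hS]⟩
      set A : ℚ := S.max' hSne with hA
      refine ⟨A • f + g, fun i => ?_⟩
      induction i using Fin.lastCases with
      | last =>
        have hfz' : f z = 0 := hfz.symm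
        simp only [LinearMap.add_apply, LinearMap.smul_apply, smul_eq_mul, ← hz, hfz']
        simpa using hgzpos
      | cast i =>
        have hfi := hf i
        have hAi : (|g (x i.castSucc)| + 1) / f (x i.castSucc) ≤ A := by
          apply Finset.le_max'
          rw [hS]
          exact Finset.mem_insert_of_mem (Finset.mem_image.mpr ⟨i, Finset.mem_univ i, rfl⟩)
        have h1 : |g (x i.castSucc)| + 1 ≤ A * f (x i.castSucc) := by
          rw [div_le_iff₀ hfi] at hAi
          linarith
        have h2 : -g (x i.castSucc) ≤ |g (x i.castSucc)| := neg_le_abs _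
        simp only [LinearMap.add_apply, LinearMap.smul_apply, smul_eq_mul]
        linarith
    · -- f z < 0 : project onto ker f
      set y : Fin k → V := fun i => f (x i.castSucc) • z - f z • x i.castSucc with hy
      have hyne : ∀ i, y i ≠ 0 := by
        intro i hyi
        have h0 : ∀ j, (Fin.snoc (fun j : Fin k => if j = i then -f z else 0)
            (f (x i.castSucc)) : Fin (k+1) → ℚ) j = 0 := by
          apply hprop
          · intro j
            induction j using Fin.lastCases with
            | last => simpa using (hf i).le
            | cast j =>
              simp only [Fin.snoc_castSucc]
              by_cases hji : j = i
              · rw [if_pos hji]; linarith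
              · rw [if_neg hji]
          · rw [Fin.sum_univ_castSucc]
            simp only [Fin.snoc_castSucc, Fin.snoc_last]
            rw [Finset.sum_eq_single i]
            · rw [if_pos rfl]
              have heq : f (x i.castSucc) • z = f z • x i.castSucc := by
                rw [hy] at hyi; rwa [sub_eq_zero] at hyi
              rw [heq, neg_smul, neg_add_cancel]
            · intro b _ hb; rw [if_neg hb, zero_smul]
            · intro h; exact absurd (Finset.mem_univ i) h
        have hlast := h0 (Fin.last k)
        simp only [Fin.snoc_last] at hlast
        exact absurd hlast (ne_of_gt (hf i))
      have hyprop : ∀ b : Fin k → ℚ, (∀ i, 0 ≤ b i) → ∑ i, b i • y i = 0 →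
          ∀ i, b i = 0 := by
        intro b hb hsum i
        have expand : ∑ j, b j • y j =
            ∑ j, (b j * (-f z)) • x j.castSucc
              + (∑ j, b j * f (x j.castSucc)) • z := by
          rw [Finset.sum_smul, ← Finset.sum_add_distrib]
          apply Finset.sum_congr rfl
          intro j _
          rw [hy]
          simp only [smul_sub, smul_smul]
          module
        have h0 : ∀ j, (Fin.snoc (fun j : Fin k => b j * (-f z))
            (∑ j, b j * f (x j.castSucc)) : Fin (k+1) → ℚ) j = 0 := by
          apply hprop
          · intro j
            induction j using Fin.lastCases with
            | last =>
              simp only [Fin.snoc_last]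
              exact Finset.sum_nonneg fun j _ => mul_nonneg (hb j) (hf j).le
            | cast j =>
              simp only [Fin.snoc_castSucc]
              exact mul_nonneg (hb j) (by linarith)
          · rw [Fin.sum_univ_castSucc]
            simp only [Fin.snoc_castSucc, Fin.snoc_last]
            rw [← expand]
            exact hsum
        have := h0 i.castSucc
        simp only [Fin.snoc_castSucc] at this
        rcases mul_eq_zero.mp this with h | h
        · exact h
        · exfalso; linarith
      obtain ⟨h, hh⟩ := ih y hyne hyprop
      have hkey : ∀ i : Fin k,
          f z * h (x i.castSucc) < f (x i.castSucc) * h z := by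
        intro i
        have := hh i
        rw [hy] at this
        simp only [map_sub, map_smul, smul_eq_mul] at this
        linarith
      set L : ℚ := h z / f z with hL
      have hLlt : ∀ i : Fin k, L < h (x i.castSucc) / f (x i.castSucc) := by
        intro i
        have h1 : L * f (x i.castSucc) < h (x i.castSucc) := by
          rw [hL, div_mul_eq_mul_div, div_lt_iff_of_neg hfz]
          have := hkey i
          nlinarith [hf i]
        rw [lt_div_iff₀ (hf i)]
        exact h1
      set Smax : Finset ℚ :=
        insert (L + 1) (Finset.univ.image fun i : Fin k =>
          h (x i.castSucc) / f (x i.castSucc)) with hSmax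
      have hSmaxne : Smax.Nonempty := ⟨L + 1, by simp [hSmax]⟩
      set M : ℚ := Smax.min' hSmaxne with hM
      have hLM : L < M := by
        rw [hM]
        apply (Finset.lt_min'_iff _ _).mpr
        intro c hc
        rw [hSmax] at hc
        rcases Finset.mem_insert.mp hc with rfl | hc
        · linarith
        · obtain ⟨i, _, rfl⟩ := Finset.mem_image.mp hc
          exact hLlt i
      set t : ℚ := (L + M) / 2 with ht
      have htL : L < t := by rw [ht]; linarith
      have htM : t < M := by rw [ht]; linarith
      refine ⟨h - t • f, fun i => ?_⟩
      induction i using Fin.lastCases with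
      | last =>
        simp only [LinearMap.sub_apply, LinearMap.smul_apply, smul_eq_mul, ← hz]
        have : t * f z < h z := by
          have : h z / f z < t := htL
          rw [div_lt_iff_of_neg hfz] at this
          linarith
        linarith
      | cast i =>
        simp only [LinearMap.sub_apply, LinearMap.smul_apply, smul_eq_mul]
        have hratio : M ≤ h (x i.castSucc) / f (x i.castSucc) := by
          rw [hM]
          apply Finset.min'_le
          rw [hSmax]
          exact Finset.mem_insert_of_mem (Finset.mem_image.mpr ⟨i, Finset.mem_univ i, rfl⟩)
        have : t < h (x i.castSucc) / f (x i.castSucc) := lt_of_lt_of_le htM hratio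
        rw [lt_div_iff₀ (hf i)] at this
        linarith

/-- Auxiliary: clearing denominators. -/
lemma cast_clear_den {D : ℕ} {q : ℚ} (h : q.den ∣ D) :
    (((D / q.den : ℕ) * q.num : ℤ) : ℚ) = (D : ℚ) * q := by
  obtain ⟨e, he⟩ := h
  subst he
  rw [Nat.mul_div_cancel_left e q.den_pos]
  have hd : (q.den : ℚ) ≠ 0 := by exact_mod_cast q.den_ne_zero
  have hq : q * (q.den : ℚ) = q.num := (eq_div_iff hd).mp (Rat.num_div_den q).symm
  push_cast
  rw [← hq]
  ring



/-- Let `P` be a fine, saturated, sharp (toric) monoid, realized as a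
submonoid of its Grothendieck group `G`.  Then there exists a group homomorphism
`φ : G = P^gp → ℤ` which is strictly positive on every nonzero element of `P`; in
particular `φ` restricts to a monoid homomorphism `P → ℕ` whose preimage of `0` is `{0}`. -/
theorem toric_monoid_exists_strictly_positive_functional
    {G : Type*} [AddCommGroup G] (P : AddSubmonoid G)
    (hfg : P.FG)
    (hgen : ∀ g : G, ∃ a ∈ P, ∃ b ∈ P, g = a - b)
    (hsat : ∀ g : G, (∃ n : ℕ, 0 < n ∧ n • g ∈ P) → g ∈ P)
    (hsharp : ∀ g ∈ P, -g ∈ P → g = 0) :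
    ∃ φ : G →+ ℤ, (∀ u ∈ P, u ≠ 0 → 0 < φ u) ∧ (∀ u ∈ P, 0 ≤ φ u) ∧
      (∀ u ∈ P, φ u = 0 → u = 0) := by
  classical
  obtain ⟨s, hs⟩ := hfg
  -- `G` is torsion-free
  haveI : NoZeroSMulDivisors ℤ G := by
    refine ⟨fun {n g} hng => ?_⟩
    by_cases hn : n = 0
    · exact Or.inl hn
    · refine Or.inr ?_
      have hpos : 0 < n.natAbs := Int.natAbs_pos.mpr hn
      have h0 : ((n.natAbs : ℤ)) • g = 0 := by
        rcases Int.natAbs_eq n with h | h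
        · rw [← h, hng]
        · rw [show ((n.natAbs : ℤ)) = -n by omega, neg_smul, hng, neg_zero]
      have h0' : n.natAbs • g = 0 := by rwa [← natCast_zsmul]
      have hgP : g ∈ P := hsat g ⟨n.natAbs, hpos, by rw [h0']; exact zero_mem _⟩
      have hgP' : -g ∈ P := hsat (-g) ⟨n.natAbs, hpos, by
        rw [smul_neg, h0', neg_zero]; exact zero_mem _⟩
      exact hsharp g hgP hgP'
  -- `G` is finitely generated as a group
  have htop : AddSubgroup.closure (↑s : Set G) = ⊤ := by
    rw [eq_top_iff]
    intro g _
    have hPle : P ≤ (AddSubgroup.closure (↑s : Set G)).toAddSubmonoid := by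
      rw [← hs]
      exact AddSubmonoid.closure_le.mpr fun t ht => AddSubgroup.subset_closure ht
    obtain ⟨a, ha, c, hc, rfl⟩ := hgen g
    exact sub_mem (hPle ha) (hPle hc)
  haveI : Module.Finite ℤ G := Module.Finite.iff_addGroup_fg.mpr ⟨⟨s, htop⟩⟩
  haveI : Module.Free ℤ G := Module.free_of_finite_type_torsion_free'
  set ι := Module.Free.ChooseBasisIndex ℤ G with hι
  set b : Module.Basis ι ℤ G := Module.Free.chooseBasis ℤ G with hb
  -- embed `G` into a `ℚ`-vector space
  set j : G →ₗ[ℤ] (ι → ℚ) :=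
    { toFun := fun g i => ((b.repr g) i : ℚ)
      map_add' := fun g h => by ext i; simp
      map_smul' := fun m g => by ext i; push_cast [Pi.smul_apply]; simp } with hj
  have hjinj : Function.Injective j := by
    intro g h hgh
    apply b.repr.injective
    ext i
    have h2 : ((b.repr g) i : ℚ) = ((b.repr h) i : ℚ) := congrFun hgh i
    exact_mod_cast h2
  -- enumerate the nonzero generators
  set T : Finset G := s.erase 0 with hT
  set eT := Fintype.equivFin ↥T with heT
  set k := Fintype.card ↥T with hk
  set xG : Fin k → G := fun i => ((eT.symm i : ↥T) : G) with hxG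
  have hxGmem : ∀ i, xG i ≠ 0 ∧ xG i ∈ s := fun i =>
    Finset.mem_erase.mp (eT.symm i).2
  have hxGP : ∀ i, xG i ∈ P := fun i => by
    rw [← hs]; exact AddSubmonoid.subset_closure (hxGmem i).2
  have hmemP : ∀ (n : Fin k → ℤ), (∀ i, 0 ≤ n i) → ∀ i, n i • xG i ∈ P := by
    intro n hn i
    rw [← Int.toNat_of_nonneg (hn i), natCast_zsmul]
    exact nsmul_mem (hxGP i) _
  set x : Fin k → (ι → ℚ) := fun i => j (xG i) with hx'
  have hx : ∀ i, x i ≠ 0 := by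
    intro i hxi
    have h2 : j (xG i) = j 0 := by rw [map_zero]; exact hxi
    exact (hxGmem i).1 (hjinj h2)
  have hprop : ∀ c : Fin k → ℚ, (∀ i, 0 ≤ c i) → ∑ i, c i • x i = 0 →
      ∀ i, c i = 0 := by
    intro c hc hcsum m
    set D : ℕ := ∏ i, (c i).den with hD
    have hdvd : ∀ i, (c i).den ∣ D := fun i =>
      Finset.dvd_prod_of_mem _ (Finset.mem_univ i)
    have hDpos : 0 < D := Finset.prod_pos fun i _ => (c i).pos
    set n : Fin k → ℤ := fun i => (D / (c i).den : ℕ) * (c i).num with hn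
    have hcast : ∀ i, ((n i : ℤ) : ℚ) = (D : ℚ) * c i := fun i => cast_clear_den (hdvd i)
    have hnneg : ∀ i, 0 ≤ n i := by
      intro i
      have h1 : (0 : ℚ) ≤ (D : ℚ) * c i := mul_nonneg (by positivity) (hc i)
      rw [← hcast i] at h1
      exact_mod_cast h1
    have hsum0 : ∑ i, n i • xG i = 0 := by
      apply hjinj
      rw [map_sum, map_zero]
      calc ∑ i, j (n i • xG i) = ∑ i, (D : ℚ) • (c i • x i) := by
            refine Finset.sum_congr rfl fun i _ => ?_
            rw [map_zsmul, ← Int.cast_smul_eq_zsmul ℚ, hcast i, mul_smul]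
        _ = (D : ℚ) • ∑ i, c i • x i := Finset.smul_sum.symm
        _ = 0 := by rw [hcsum, smul_zero]
    have hterm : ∀ i, n i • xG i = 0 := by
      intro i
      have haP : n i • xG i ∈ P := hmemP n hnneg i
      have hsplit : (∑ m' ∈ Finset.univ.erase i, n m' • xG m') + n i • xG i = 0 := by
        rw [Finset.sum_erase_add _ _ (Finset.mem_univ i)]
        exact hsum0
      have hnegP : -(n i • xG i) ∈ P := by
        have h3 : -(n i • xG i) = ∑ m' ∈ Finset.univ.erase i, n m' • xG m' := by
          rw [neg_eq_iff_add_eq_zero, add_comm]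
          exact hsplit
        rw [h3]
        exact AddSubmonoid.sum_mem _ fun m' _ => hmemP n hnneg m'
      exact hsharp _ haP hnegP
    rcases smul_eq_zero.mp (hterm m) with h | h
    · have h1 : ((n m : ℤ) : ℚ) = 0 := by rw [h]; simp
      rw [hcast m] at h1
      have hD0 : (D : ℚ) ≠ 0 := by positivity
      exact (mul_eq_zero.mp h1).resolve_left hD0
    · exact absurd h (hxGmem m).1
  obtain ⟨f, hfpos⟩ := exists_pos_functional k x hx hprop
  -- make the functional integral
  set N : ℕ := ∏ i : ι, (f (j (b i))).den with hN
  have hdvdN : ∀ i : ι, (f (j (b i))).den ∣ N := fun i =>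
    Finset.dvd_prod_of_mem _ (Finset.mem_univ i)
  have hNpos : 0 < N := Finset.prod_pos fun i _ => (f (j (b i))).pos
  have hNQ : (0 : ℚ) < N := by exact_mod_cast hNpos
  set a : ι → ℤ := fun i => (N / (f (j (b i))).den : ℕ) * (f (j (b i))).num with ha
  have hacast : ∀ i, ((a i : ℤ) : ℚ) = (N : ℚ) * f (j (b i)) := fun i =>
    cast_clear_den (hdvdN i)
  set φℤ : G →ₗ[ℤ] ℤ := Module.Basis.constr b ℤ a with hφ
  have hφval : ∀ g : G, ((φℤ g : ℤ) : ℚ) = (N : ℚ) * f (j g) := by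
    have heq : (Int.castAddHom ℚ).toIntLinearMap.comp φℤ
        = (N : ℤ) • ((f.restrictScalars ℤ).comp j) := by
      apply b.ext
      intro i
      simp only [LinearMap.comp_apply, AddMonoidHom.coe_toIntLinearMap,
        Int.coe_castAddHom, LinearMap.smul_apply, LinearMap.coe_restrictScalars,
        hφ, Module.Basis.constr_basis, smul_eq_mul, zsmul_eq_mul]
      rw [hacast i]
      push_cast
      ring
    intro g
    have h1 := LinearMap.congr_fun heq g
    simp only [LinearMap.comp_apply, AddMonoidHom.coe_toIntLinearMap,
      Int.coe_castAddHom, LinearMap.smul_apply, LinearMap.coe_restrictScalars,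
      smul_eq_mul, zsmul_eq_mul] at h1
    rw [h1]
    push_cast
    ring
  -- the main positivity claim
  have hmain : ∀ u ∈ P, 0 ≤ f (j u) ∧ (f (j u) = 0 → u = 0) := by
    intro u hu
    rw [← hs] at hu
    refine AddSubmonoid.closure_induction ?_ ?_ ?_ hu
    · intro t ht
      by_cases ht0 : t = 0
      · subst ht0; simp
      · have htT : t ∈ T := Finset.mem_erase.mpr ⟨ht0, ht⟩
        have hteq : xG (eT ⟨t, htT⟩) = t := by
          simp only [hxG, Equiv.symm_apply_apply]
        have hp := hfpos (eT ⟨t, htT⟩)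
        simp only [hx'] at hp
        rw [hteq] at hp
        exact ⟨hp.le, fun h0 => absurd h0 (ne_of_gt hp)⟩
    · simp
    · intro u v hu' hv' ⟨hu1, hu2⟩ ⟨hv1, hv2⟩
      constructor
      · rw [map_add, map_add]; linarith
      · intro h0
        rw [map_add, map_add] at h0
        have h1 : f (j u) = 0 := by linarith
        have h2 : f (j v) = 0 := by linarith
        rw [hu2 h1, hv2 h2, add_zero]
  refine ⟨φℤ.toAddMonoidHom, ?_, ?_, ?_⟩
  · intro u huP hune
    have ⟨h1, h2⟩ := hmain u huP
    have hne : f (j u) ≠ 0 := fun h => hune (h2 h)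
    have hpos : 0 < f (j u) := lt_of_le_of_ne h1 (Ne.symm hne)
    have : (0 : ℚ) < ((φℤ u : ℤ) : ℚ) := by
      rw [hφval u]; positivity
    exact_mod_cast this
  · intro u huP
    have ⟨h1, _⟩ := hmain u huP
    have : (0 : ℚ) ≤ ((φℤ u : ℤ) : ℚ) := by
      rw [hφval u]; positivity
    exact_mod_cast this
  · intro u huP h0
    have ⟨_, h2⟩ := hmain u huP
    apply h2
    have h0' : φℤ u = 0 := h0
    have : ((φℤ u : ℤ) : ℚ) = 0 := by rw [h0']; simp
    rw [hφval u] at this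
    exact (mul_eq_zero.mp this).resolve_left (ne_of_gt hNQ)
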